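/- The collection of U-invariant sets (A ∈ B with 1_A U-invariant) is a σ-algebra, and a function u ∈ L^p(E,m) is U-invariant if and only if u is measurable with respect to this σ-algebra (up to m-a.e. equality). -/

import Mathlib

open MeasureTheory ProbabilityTheory Filter
open scoped NNReal ENNReal

/-- The resolvent operators acting on real functions: `U_α f (x) = ∫ f d(U α x)`. -/
noncomputable def Uop {E : Type*} [MeasurableSpace E]
    (U : ℝ → Kernel E E) (α : ℝ) (f : E → ℝ) (x : E) : ℝ :=
  ∫ y, f y ∂(U α x)

/-- `(U_α)` is a sub-Markovian resolvent of kernels: `α U_α 1 ≤ 1`. -/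
def SubMarkovResolvent {E : Type*} [MeasurableSpace E] (U : ℝ → Kernel E E) : Prop :=
  ∀ α > (0:ℝ), ∀ x : E, (U α x) Set.univ ≤ ENNReal.ofReal α⁻¹

/-- `m` is sub-invariant for `(U_α)`: `m(α U_α f) ≤ m(f)` for all `f ≥ 0` measurable. -/
def SubInvariantMeasure {E : Type*} [MeasurableSpace E]
    (m : Measure E) (U : ℝ → Kernel E E) : Prop :=
  ∀ α > (0:ℝ), ∀ f : E → ℝ≥0∞, Measurable f →
    ∫⁻ x, ENNReal.ofReal α * ∫⁻ y, f y ∂(U α x) ∂m ≤ ∫⁻ x, f x ∂m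

/-- Weak duality of `(U_α)` and `(Û_α)` w.r.t. `m`: `∫ f U_α g dm = ∫ g Û_α f dm`. -/
def WeakDuality {E : Type*} [MeasurableSpace E]
    (m : Measure E) (U Uhat : ℝ → Kernel E E) : Prop :=
  ∀ α > (0:ℝ), ∀ f g : E → ℝ≥0∞, Measurable f → Measurable g →
    ∫⁻ x, f x * ∫⁻ y, g y ∂(U α x) ∂m = ∫⁻ x, g x * ∫⁻ y, f y ∂(Uhat α x) ∂m

/-- `u` is `U`-invariant: `U_α(uf) = u U_α f` m-a.e. for all bounded measurable `f`, `α > 0`. -/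
def UInvariant {E : Type*} [MeasurableSpace E]
    (m : Measure E) (U : ℝ → Kernel E E) (u : E → ℝ) : Prop :=
  ∀ α > (0:ℝ), ∀ f : E → ℝ, Measurable f → (∃ C, ∀ x, |f x| ≤ C) →
    Uop U α (fun y => u y * f y) =ᵐ[m] fun x => u x * Uop U α f x

/-- `A` is a `U`-invariant set: `A` is measurable and `1_A` is `U`-invariant. -/
def UInvariantSet {E : Type*} [MeasurableSpace E]
    (m : Measure E) (U : ℝ → Kernel E E) (A : Set E) : Prop :=
  MeasurableSet A ∧ UInvariant m U (A.indicator fun _ => (1:ℝ))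

section Aux

variable {E : Type*} [MeasurableSpace E] {m : Measure E} {U : ℝ → Kernel E E}

lemma isFiniteMeasure_U (hU : SubMarkovResolvent U) {α : ℝ} (hα : 0 < α) (x : E) :
    IsFiniteMeasure (U α x) :=
  ⟨lt_of_le_of_lt (hU α hα x) ENNReal.ofReal_lt_top⟩

lemma integrable_of_bdd {μ : Measure E} [IsFiniteMeasure μ] {f : E → ℝ} {C : ℝ}
    (hf : Measurable f) (hC : ∀ y, |f y| ≤ C) : Integrable f μ :=
  ⟨hf.aestronglyMeasurable, HasFiniteIntegral.of_bounded (C := C)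
    (Filter.Eventually.of_forall (fun y => by simpa [Real.norm_eq_abs] using hC y))⟩

lemma integral_ind_one {μ : Measure E} {s : Set E} (hs : MeasurableSet s) :
    ∫ y, s.indicator (fun _ => (1:ℝ)) y ∂μ = (μ s).toReal := by
  exact integral_indicator_one (μ := μ) hs

lemma ae_kernel_null (hm : SubInvariantMeasure m U) {α : ℝ} (hα : 0 < α)
    {N : Set E} (hN : MeasurableSet N) (h0 : m N = 0) :
    ∀ᵐ x ∂m, (U α x) N = 0 := by
  have h := hm α hα (N.indicator 1) (measurable_one.indicator hN)
  simp only [lintegral_indicator_one hN] at h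
  rw [h0, le_zero_iff] at h
  have hmeas : Measurable fun x => ENNReal.ofReal α * (U α x) N :=
    measurable_const.mul ((U α).measurable_coe hN)
  rw [lintegral_eq_zero_iff hmeas] at h
  filter_upwards [h] with x hx
  rcases mul_eq_zero.mp hx with h' | h'
  · exact absurd h' (by simp [ENNReal.ofReal_eq_zero, not_le, hα])
  · exact h'

lemma conc_of_invariantSet (hU : SubMarkovResolvent U) {A : Set E}
    (hA : UInvariantSet m U A) {α : ℝ} (hα : 0 < α) :
    ∀ᵐ x ∂m, (U α x) {y | ¬ (y ∈ A ↔ x ∈ A)} = 0 := by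
  have h := hA.2 α hα (fun _ => 1) measurable_const ⟨1, fun x => by simp⟩
  filter_upwards [h] with x hx
  haveI := isFiniteMeasure_U hU hα x
  simp only [Uop, mul_one] at hx
  rw [integral_ind_one hA.1, integral_const, smul_eq_mul, mul_one] at hx
  by_cases hxA : x ∈ A
  · rw [Set.indicator_of_mem hxA, one_mul] at hx
    have hAeq : (U α x) A = (U α x) Set.univ :=
      (ENNReal.toReal_eq_toReal_iff' (measure_ne_top _ _) (measure_ne_top _ _)).1 hx
    have hset : {y | ¬ (y ∈ A ↔ x ∈ A)} = Aᶜ := by ext y; simp [hxA]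
    rw [hset, measure_compl hA.1 (measure_ne_top _ _), hAeq, tsub_self]
  · rw [Set.indicator_of_notMem hxA, zero_mul] at hx
    have hA0 : (U α x) A = 0 :=
      ((ENNReal.toReal_eq_zero_iff _).1 hx).resolve_right (measure_ne_top _ _)
    have hset : {y | ¬ (y ∈ A ↔ x ∈ A)} = A := by ext y; simp [hxA]
    rw [hset]; exact hA0

lemma invariantSet_of_conc {A : Set E} (hAm : MeasurableSet A)
    (h : ∀ α : ℝ, 0 < α → ∀ᵐ x ∂m, (U α x) {y | ¬ (y ∈ A ↔ x ∈ A)} = 0) :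
    UInvariantSet m U A := by
  refine ⟨hAm, fun α hα f hf hb => ?_⟩
  filter_upwards [h α hα] with x hx
  simp only [Uop]
  have hsub : {y | ¬ (A.indicator (fun _ => (1:ℝ)) y * f y
      = A.indicator (fun _ => (1:ℝ)) x * f y)} ⊆ {y | ¬ (y ∈ A ↔ x ∈ A)} := by
    intro y hy hiff
    apply hy
    by_cases hyA : y ∈ A
    · rw [Set.indicator_of_mem hyA, Set.indicator_of_mem (hiff.1 hyA)]
    · rw [Set.indicator_of_notMem hyA,
        Set.indicator_of_notMem (fun hxA => hyA (hiff.2 hxA))]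
  have hae : (fun y => A.indicator (fun _ => (1:ℝ)) y * f y)
      =ᵐ[U α x] fun y => A.indicator (fun _ => (1:ℝ)) x * f y :=
    ae_iff.2 (measure_mono_null hsub hx)
  rw [integral_congr_ae hae, integral_const_mul]

noncomputable def invariantSigma (m : Measure E) (U : ℝ → Kernel E E)
    (hU : SubMarkovResolvent U) : MeasurableSpace E where
  MeasurableSet' := UInvariantSet m U
  measurableSet_empty := invariantSet_of_conc MeasurableSet.empty (by
    intro α hα
    refine Filter.Eventually.of_forall (fun x => ?_)
    have : {y : E | ¬ (y ∈ (∅ : Set E) ↔ x ∈ (∅ : Set E))} = ∅ := by ext y; simp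
    rw [this]; exact measure_empty)
  measurableSet_compl := by
    intro A hA
    refine invariantSet_of_conc hA.1.compl (fun α hα => ?_)
    filter_upwards [conc_of_invariantSet hU hA hα] with x hx
    have : {y | ¬ (y ∈ Aᶜ ↔ x ∈ Aᶜ)} = {y | ¬ (y ∈ A ↔ x ∈ A)} := by
      ext y; simp [Set.mem_compl_iff, not_iff_not]
    rw [this]; exact hx
  measurableSet_iUnion := by
    intro g hg
    refine invariantSet_of_conc (MeasurableSet.iUnion fun n => (hg n).1) (fun α hα => ?_)
    filter_upwards [ae_all_iff.2 (fun n => conc_of_invariantSet hU (hg n) hα)] with x hx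
    refine measure_mono_null ?_
      (measure_iUnion_null (s := fun n => {y | ¬ (y ∈ g n ↔ x ∈ g n)}) hx)
    intro y hy
    by_contra hnot
    simp only [Set.mem_iUnion, not_exists, Set.mem_setOf_eq, not_not] at hnot
    exact hy (by simp only [Set.mem_iUnion]; exact exists_congr hnot)

lemma null_ne_of_rat {μ : Measure E} {w : E → ℝ} {x : E}
    (h : ∀ q r : ℚ, ¬ ((q:ℝ) < w x ∧ w x ≤ (r:ℝ)) →
      μ (w ⁻¹' Set.Ioc (q:ℝ) (r:ℝ)) = 0) :
    μ {y | w y ≠ w x} = 0 := by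
  have hnull : ∀ p : ℚ × ℚ,
      μ (if (((p.1:ℝ)) < w x ∧ w x ≤ ((p.2:ℝ))) then ∅ else
          w ⁻¹' Set.Ioc ((p.1:ℝ)) ((p.2:ℝ))) = 0 := by
    intro p
    split_ifs with hp
    · exact measure_empty
    · exact h p.1 p.2 hp
  refine measure_mono_null ?_ (measure_iUnion_null hnull)
  intro y hy
  rcases lt_or_gt_of_ne hy with hlt | hgt
  · obtain ⟨r, hr1, hr2⟩ := exists_rat_btwn hlt
    obtain ⟨q, hq⟩ := exists_rat_lt (w y)
    refine Set.mem_iUnion.2 ⟨(q, r), ?_⟩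
    rw [if_neg (fun hc => absurd hc.2 (not_le.2 hr2))]
    exact ⟨hq, hr1.le⟩
  · obtain ⟨q, hq1, hq2⟩ := exists_rat_btwn hgt
    obtain ⟨r, hr⟩ := exists_rat_gt (w y)
    refine Set.mem_iUnion.2 ⟨(q, r), ?_⟩
    rw [if_neg (fun hc => absurd hc.1 (not_lt.2 hq1.le))]
    exact ⟨hq2, hr.le⟩

lemma null_of_int_eq {μ : Measure E} [IsFiniteMeasure μ] {w : E → ℝ}
    (hw : Measurable w) {q r c : ℝ} {S : Set E} (hSdef : S = w ⁻¹' Set.Ioc q r)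
    (hint : ∫ y, w y * S.indicator (fun _ => (1:ℝ)) y ∂μ = c * (μ S).toReal)
    (hc : c ≤ q ∨ r < c) : μ S = 0 := by
  have hS : MeasurableSet S := hSdef ▸ hw measurableSet_Ioc
  set ind := S.indicator (fun _ => (1:ℝ)) with hind
  have hbd : ∀ y ∈ S, q < w y ∧ w y ≤ r := by
    intro y hy; rw [hSdef] at hy; exact hy
  have hiw : Integrable (fun y => w y * ind y) μ := by
    refine integrable_of_bdd (C := max |q| |r|) (hw.mul (measurable_const.indicator hS)) ?_
    intro y
    by_cases hy : y ∈ S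
    · rw [hind, Set.indicator_of_mem hy, mul_one]
      rcases hbd y hy with ⟨h1, h2⟩
      rw [abs_le]
      constructor
      · calc -(max |q| |r|) ≤ -|q| := by simp
          _ ≤ q := neg_abs_le q
          _ ≤ w y := h1.le
      · exact h2.trans ((le_abs_self r).trans (le_max_right _ _))
    · rw [hind, Set.indicator_of_notMem hy, mul_zero]
      simp [abs_nonneg, le_max_iff, abs_nonneg q]
  have hic : Integrable (fun y => c * ind y) μ := by
    refine integrable_of_bdd (C := |c|) (measurable_const.mul (measurable_const.indicator hS)) ?_
    intro y
    by_cases hy : y ∈ S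
    · rw [hind, Set.indicator_of_mem hy, mul_one]
    · rw [hind, Set.indicator_of_notMem hy, mul_zero]; simp
  have hci : ∫ y, c * ind y ∂μ = c * (μ S).toReal := by
    rw [integral_const_mul, hind, integral_ind_one hS]
  rcases hc with hc | hc
  · -- c ≤ q : use g = w*ind - c*ind ≥ 0
    have hnn : 0 ≤ fun y => w y * ind y - c * ind y := by
      intro y
      by_cases hy : y ∈ S
      · simp only [hind, Set.indicator_of_mem hy, mul_one, Pi.zero_apply]
        have := (hbd y hy).1
        linarith
      · simp [hind, Set.indicator_of_notMem hy]
    have hzero : ∫ y, (w y * ind y - c * ind y) ∂μ = 0 := by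
      rw [integral_sub hiw hic, hint, hci, sub_self]
    have hae := (integral_eq_zero_iff_of_nonneg hnn (hiw.sub hic)).1 hzero
    refine measure_mono_null ?_ (ae_iff.1 hae)
    intro y hy
    have h1 := (hbd y hy).1
    simp only [Set.mem_setOf_eq, hind, Set.indicator_of_mem hy, mul_one, Pi.zero_apply]
    intro h0
    linarith
  · -- r < c : use g = c*ind - w*ind ≥ 0
    have hnn : 0 ≤ fun y => c * ind y - w y * ind y := by
      intro y
      by_cases hy : y ∈ S
      · simp only [hind, Set.indicator_of_mem hy, mul_one, Pi.zero_apply]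
        have := (hbd y hy).2
        linarith
      · simp [hind, Set.indicator_of_notMem hy]
    have hzero : ∫ y, (c * ind y - w y * ind y) ∂μ = 0 := by
      rw [integral_sub hic hiw, hint, hci, sub_self]
    have hae := (integral_eq_zero_iff_of_nonneg hnn (hic.sub hiw)).1 hzero
    refine measure_mono_null ?_ (ae_iff.1 hae)
    intro y hy
    have h2 := (hbd y hy).2
    simp only [Set.mem_setOf_eq, hind, Set.indicator_of_mem hy, mul_one, Pi.zero_apply]
    intro h0
    linarith

lemma conc_of_uInvariant (hU : SubMarkovResolvent U) {w : E → ℝ} (hw : Measurable w)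
    (hinv : UInvariant m U w) {α : ℝ} (hα : 0 < α) :
    ∀ᵐ x ∂m, (U α x) {y | w y ≠ w x} = 0 := by
  have key : ∀ p : ℚ × ℚ, ∀ᵐ x ∂m,
      Uop U α (fun y => w y *
        (w ⁻¹' Set.Ioc ((p.1:ℝ)) ((p.2:ℝ))).indicator (fun _ => (1:ℝ)) y) x
        = w x * Uop U α ((w ⁻¹' Set.Ioc ((p.1:ℝ)) ((p.2:ℝ))).indicator (fun _ => (1:ℝ))) x := by
    intro p
    refine hinv α hα _ (measurable_const.indicator (hw measurableSet_Ioc)) ⟨1, fun y => ?_⟩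
    by_cases hy : y ∈ w ⁻¹' Set.Ioc ((p.1:ℝ)) ((p.2:ℝ))
    · rw [Set.indicator_of_mem hy]; simp
    · rw [Set.indicator_of_notMem hy]; simp
  filter_upwards [ae_all_iff.2 key] with x hx
  haveI := isFiniteMeasure_U hU hα x
  apply null_ne_of_rat
  intro q r hbad
  have hx' := hx (q, r)
  simp only [Uop] at hx'
  rw [integral_ind_one (hw measurableSet_Ioc)] at hx'
  refine null_of_int_eq hw rfl hx' ?_
  by_cases h1 : (q:ℝ) < w x
  · right
    by_contra h2
    exact hbad ⟨h1, not_lt.1 h2⟩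
  · left; exact not_lt.1 h1

lemma uInvariant_of_conc {w : E → ℝ}
    (h : ∀ α : ℝ, 0 < α → ∀ᵐ x ∂m, (U α x) {y | w y ≠ w x} = 0) :
    UInvariant m U w := by
  intro α hα f hf hb
  filter_upwards [h α hα] with x hx
  simp only [Uop]
  have hsub : {y | ¬ (w y * f y = w x * f y)} ⊆ {y | w y ≠ w x} := by
    intro y hy heq
    exact hy (by rw [heq])
  have hae : (fun y => w y * f y) =ᵐ[U α x] fun y => w x * f y :=
    ae_iff.2 (measure_mono_null hsub hx)
  rw [integral_congr_ae hae, integral_const_mul]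

lemma uInvariant_congr (hm : SubInvariantMeasure m U) {u v : E → ℝ}
    (huv : u =ᵐ[m] v) (hv : UInvariant m U v) : UInvariant m U u := by
  intro α hα f hf hb
  obtain ⟨N, hsubN, hNm, hN0⟩ :=
    exists_measurable_superset_of_null (ae_iff.1 huv)
  filter_upwards [ae_kernel_null hm hα hNm hN0, hv α hα f hf hb, huv] with x hx1 hx2 hx3
  have hsub : {y | ¬ (u y * f y = v y * f y)} ⊆ N := by
    intro y hy
    refine hsubN ?_
    simp only [Set.mem_setOf_eq]
    intro heq
    exact hy (by rw [heq])
  have hae : (fun y => u y * f y) =ᵐ[U α x] fun y => v y * f y :=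
    ae_iff.2 (measure_mono_null hsub hx1)
  simp only [Uop] at hx2 ⊢
  rw [integral_congr_ae hae, hx2, hx3]

end Aux

/-- The collection of `U`-invariant sets is a σ-algebra (the σ-algebra it
generates consists of `U`-invariant sets), and `u ∈ L^p(E,m)` is `U`-invariant iff `u` is
(m-a.e. equal to a function) measurable w.r.t. this σ-algebra. -/
theorem uInvariant_iff_measurable_invariant_sets
    {E : Type*} [MeasurableSpace E] (m : Measure E) [SigmaFinite m]
    (U : ℝ → Kernel E E)
    (hU : SubMarkovResolvent U) (hm : SubInvariantMeasure m U)
    (p : ℝ≥0∞) (u : E → ℝ) (hu : MemLp u p m) :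
    (∀ A : Set E,
        MeasurableSet[MeasurableSpace.generateFrom {B | UInvariantSet m U B}] A →
        UInvariantSet m U A) ∧
    (UInvariant m U u ↔ ∃ v : E → ℝ, v =ᵐ[m] u ∧
        Measurable[MeasurableSpace.generateFrom {B | UInvariantSet m U B}] v) := by
  have hle : MeasurableSpace.generateFrom {B | UInvariantSet m U B} ≤ invariantSigma m U hU :=
    MeasurableSpace.generateFrom_le (fun B hB => hB)
  have part1 : ∀ A : Set E,
      MeasurableSet[MeasurableSpace.generateFrom {B | UInvariantSet m U B}] A →
      UInvariantSet m U A := fun A hA => hle A hA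
  refine ⟨part1, ?_, ?_⟩
  · intro hinv
    have hmeas := hu.1
    set u' := hmeas.mk u with hu'
    have hmk : u =ᵐ[m] u' := hmeas.ae_eq_mk
    have hu'm : Measurable u' := hmeas.stronglyMeasurable_mk.measurable
    have hinv' : UInvariant m U u' := uInvariant_congr hm hmk.symm hinv
    refine ⟨u', hmk.symm, ?_⟩
    have hsets : ∀ c : ℝ, UInvariantSet m U (u' ⁻¹' Set.Ioi c) := by
      intro c
      refine invariantSet_of_conc (hu'm measurableSet_Ioi) (fun α hα => ?_)
      filter_upwards [conc_of_uInvariant hU hu'm hinv' hα] with x hx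
      refine measure_mono_null ?_ hx
      intro y hy
      simp only [Set.mem_setOf_eq] at hy ⊢
      intro heq
      apply hy
      simp [Set.mem_preimage, Set.mem_Ioi, heq]
    exact measurable_of_Ioi (fun c => MeasurableSpace.measurableSet_generateFrom (hsets c))
  · rintro ⟨v, hvu, hvmeas⟩
    have hvinv : UInvariant m U v := by
      apply uInvariant_of_conc
      intro α hα
      have hS : ∀ p : ℚ × ℚ, UInvariantSet m U (v ⁻¹' Set.Ioc ((p.1:ℝ)) ((p.2:ℝ))) :=
        fun p => part1 _ (hvmeas measurableSet_Ioc)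
      filter_upwards [ae_all_iff.2
        (fun p : ℚ × ℚ => conc_of_invariantSet hU (hS p) hα)] with x hx
      apply null_ne_of_rat
      intro q r hbad
      refine measure_mono_null ?_ (hx (q, r))
      intro y hy
      simp only [Set.mem_setOf_eq]
      intro hiff
      exact hbad (hiff.1 hy)
    exact uInvariant_congr hm hvu.symm hvinv
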